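/- (Schur majorisation for marginals) Let ω̄ be a diagonal density matrix on (ℂ^d)^{⊗n}, V a unitary, μ = V ω̄ V†, and ρ = tr_{2..n}(μ) the first marginal. Let ω̄₀^↓ be the diagonal d×d matrix obtained by sorting the eigenvalues of ω̄ in decreasing order, arranging them as a diagonal matrix on (ℂ^d)^{⊗n} with decreasing entries in lexicographic position order, and taking the first marginal. Then the eigenvalue vector of ρ is majorised by the diagonal of ω̄₀^↓. -/

import Mathlib

open Finset Matrix

/-- The entries of `x` sorted in decreasing order. -/
noncomputable def sortDesc {n : ℕ} (x : Fin n → ℝ) : Fin n → ℝ :=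
  fun i => x (Tuple.sort x i.rev)

/-- Sum of the `k` largest entries of `x`. -/
noncomputable def topSum {n : ℕ} (x : Fin n → ℝ) (k : ℕ) : ℝ :=
  ∑ i ∈ Finset.univ.filter (fun i : Fin n => (i : ℕ) < k), sortDesc x i

/-- `y` is majorised by `x`. -/
def Majorizes {n : ℕ} (y x : Fin n → ℝ) : Prop :=
  (∀ k : ℕ, topSum y k ≤ topSum x k) ∧ (∑ i, y i = ∑ i, x i)

/-- Partial trace over all tensor factors except the first one. -/
noncomputable def marginal0 {d n : ℕ}
    (A : Matrix (Fin (n + 1) → Fin d) (Fin (n + 1) → Fin d) ℂ) :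
    Matrix (Fin d) (Fin d) ℂ :=
  fun i j => ∑ f : Fin (n + 1) → Fin d,
    if f 0 = i then A f (Function.update f 0 j) else 0

/-! ### Auxiliary lemmas about `sortDesc` and `topSum` -/

/-- `sortDesc x` as composition with a permutation. -/
noncomputable def sortPerm {n : ℕ} (x : Fin n → ℝ) : Equiv.Perm (Fin n) :=
  (Fin.revPerm : Equiv.Perm (Fin n)).trans (Tuple.sort x)

lemma sortDesc_eq_comp {n : ℕ} (x : Fin n → ℝ) : sortDesc x = x ∘ (sortPerm x) := rfl

lemma sum_sortDesc {n : ℕ} (x : Fin n → ℝ) : ∑ i, sortDesc x i = ∑ i, x i := by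
  rw [sortDesc_eq_comp]
  exact Equiv.sum_comp (sortPerm x) x

lemma sortDesc_antitone {n : ℕ} (x : Fin n → ℝ) : Antitone (sortDesc x) := by
  intro i j hij
  exact Tuple.monotone_sort x (by simpa using Fin.rev_le_rev.mpr hij)

/-- Key rearrangement inequality, sorted version. -/
lemma key_ineq {N : ℕ} (v c : Fin N → ℝ) (hv : Antitone v) (hv0 : ∀ i, 0 ≤ v i)
    (hc0 : ∀ i, 0 ≤ c i) (hc1 : ∀ i, c i ≤ 1) (m : ℕ) (hcm : ∑ i, c i ≤ m) :
    ∑ i, c i * v i ≤ ∑ i ∈ Finset.univ.filter (fun i : Fin N => (i : ℕ) < m), v i := by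
  by_cases hm : N ≤ m
  · have : Finset.univ.filter (fun i : Fin N => (i : ℕ) < m) = Finset.univ := by
      apply Finset.filter_true_of_mem
      intro i _
      exact lt_of_lt_of_le i.isLt hm
    rw [this]
    exact Finset.sum_le_sum fun i _ => by
      calc c i * v i ≤ 1 * v i := mul_le_mul_of_nonneg_right (hc1 i) (hv0 i)
        _ = v i := one_mul _
  · push_neg at hm
    set t := v ⟨m, hm⟩ with ht
    have ht0 : 0 ≤ t := hv0 _
    set A := Finset.univ.filter (fun i : Fin N => (i : ℕ) < m) with hA
    have hcardA : A.card = m := by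
      have : A = Finset.Iio (⟨m, hm⟩ : Fin N) := by
        ext i
        simp [hA, Finset.mem_Iio, Fin.lt_def]
      rw [this, Fin.card_Iio]
    have h1 : ∀ i ∈ A, c i * v i ≤ v i + (c i - 1) * t := by
      intro i hi
      have hiA : (i : ℕ) < m := by
        rw [hA] at hi; simpa using hi
      have hvt : t ≤ v i := hv (by simpa [Fin.le_def] using le_of_lt hiA)
      nlinarith [hc1 i, hc0 i]
    have h2 : ∀ i ∈ Finset.univ.filter (fun i : Fin N => ¬ ((i : ℕ) < m)),
        c i * v i ≤ c i * t := by
      intro i hi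
      have him : ¬ ((i : ℕ) < m) := by simpa using hi
      have hvt : v i ≤ t := hv (by simpa [Fin.le_def] using Nat.le_of_not_lt him)
      exact mul_le_mul_of_nonneg_left hvt (hc0 i)
    have hsplit := Finset.sum_filter_add_sum_filter_not Finset.univ
      (fun i : Fin N => (i : ℕ) < m) (fun i => c i * v i)
    have hsplitc := Finset.sum_filter_add_sum_filter_not Finset.univ
      (fun i : Fin N => (i : ℕ) < m) c
    calc ∑ i, c i * v i
        = ∑ i ∈ A, c i * v i
          + ∑ i ∈ Finset.univ.filter (fun i : Fin N => ¬ ((i : ℕ) < m)), c i * v i := by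
          rw [← hsplit]
      _ ≤ (∑ i ∈ A, (v i + (c i - 1) * t))
          + ∑ i ∈ Finset.univ.filter (fun i : Fin N => ¬ ((i : ℕ) < m)), c i * t :=
          add_le_add (Finset.sum_le_sum h1) (Finset.sum_le_sum h2)
      _ = ∑ i ∈ A, v i
          + ((∑ i ∈ A, c i)
            + (∑ i ∈ Finset.univ.filter (fun i : Fin N => ¬ ((i : ℕ) < m)), c i) - m) * t := by
          rw [Finset.sum_add_distrib, ← Finset.sum_mul, ← Finset.sum_mul,
            Finset.sum_sub_distrib, Finset.sum_const, hcardA]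
          ring
      _ ≤ ∑ i ∈ A, v i := by
          rw [hsplitc]
          nlinarith

/-- Rearrangement inequality: a `[0,1]`-weighted sum with total weight at most `m`
is at most the sum of the `m` largest entries. -/
lemma sum_mul_le_topSum {N : ℕ} (w c : Fin N → ℝ) (hw : ∀ i, 0 ≤ w i)
    (hc0 : ∀ i, 0 ≤ c i) (hc1 : ∀ i, c i ≤ 1) (m : ℕ) (hcm : ∑ i, c i ≤ m) :
    ∑ i, c i * w i ≤ topSum w m := by
  have h1 : ∑ i, c i * w i = ∑ i, (c (sortPerm w i)) * sortDesc w i := by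
    rw [sortDesc_eq_comp]
    exact (Equiv.sum_comp (sortPerm w) (fun i => c i * w i)).symm
  rw [h1, topSum]
  refine key_ineq (sortDesc w) (fun i => c (sortPerm w i)) (sortDesc_antitone w)
    (fun i => hw _) (fun i => hc0 _) (fun i => hc1 _) m ?_
  rw [Equiv.sum_comp (sortPerm w) c]
  exact hcm

lemma sum_subset_le_topSum {N : ℕ} (w : Fin N → ℝ) (hw : ∀ i, 0 ≤ w i)
    (s : Finset (Fin N)) (m : ℕ) (hs : s.card ≤ m) :
    ∑ i ∈ s, w i ≤ topSum w m := by
  have h1 : ∑ i ∈ s, w i = ∑ i, (if i ∈ s then (1 : ℝ) else 0) * w i := by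
    simp [ite_mul, Finset.sum_ite_mem]
  rw [h1]
  refine sum_mul_le_topSum w _ hw (fun i => by split <;> norm_num)
    (fun i => by split <;> norm_num) m ?_
  simp only [Finset.sum_ite_mem, Finset.univ_inter, Finset.sum_const, nsmul_eq_mul, mul_one]
  exact_mod_cast hs

/-! ### Matrix computation lemmas -/

lemma marginal0_apply {d n : ℕ}
    (A : Matrix (Fin (n + 1) → Fin d) (Fin (n + 1) → Fin d) ℂ) (i j : Fin d) :
    marginal0 A i j = ∑ g : Fin n → Fin d, A (Fin.cons i g) (Fin.cons j g) := by
  unfold marginal0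
  rw [← Equiv.sum_comp (Fin.consEquiv (fun _ => Fin d))]
  rw [Fintype.sum_prod_type]
  simp only [Fin.consEquiv_apply, Fin.cons_zero, Fin.update_cons_zero]
  rw [Finset.sum_comm]
  simp [Finset.sum_ite_eq']
  simp [Fin.consEquiv, Fin.update_cons_zero]

lemma sum4_reorder {α β γ δ M : Type*} [Fintype α] [Fintype β] [Fintype γ] [Fintype δ]
    [AddCommMonoid M] (F : α → β → γ → δ → M) :
    ∑ a, ∑ b, ∑ c, ∑ e, F a b c e = ∑ e, ∑ c, ∑ b, ∑ a, F a b c e := by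
  calc ∑ a, ∑ b, ∑ c, ∑ e, F a b c e
      = ∑ a, ∑ b, ∑ e, ∑ c, F a b c e :=
        Finset.sum_congr rfl fun _ _ => Finset.sum_congr rfl fun _ _ => Finset.sum_comm
    _ = ∑ a, ∑ e, ∑ b, ∑ c, F a b c e :=
        Finset.sum_congr rfl fun _ _ => Finset.sum_comm
    _ = ∑ e, ∑ a, ∑ b, ∑ c, F a b c e := Finset.sum_comm
    _ = ∑ e, ∑ a, ∑ c, ∑ b, F a b c e :=
        Finset.sum_congr rfl fun _ _ => Finset.sum_congr rfl fun _ _ => Finset.sum_comm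
    _ = ∑ e, ∑ c, ∑ a, ∑ b, F a b c e :=
        Finset.sum_congr rfl fun _ _ => Finset.sum_comm
    _ = ∑ e, ∑ c, ∑ b, ∑ a, F a b c e :=
        Finset.sum_congr rfl fun _ _ => Finset.sum_congr rfl fun _ _ => Finset.sum_comm

/-- The overlap amplitude `z a g h`. -/
noncomputable def zC {d n : ℕ} (U : Matrix (Fin d) (Fin d) ℂ)
    (V : Matrix (Fin (n + 1) → Fin d) (Fin (n + 1) → Fin d) ℂ)
    (a : Fin d) (g : Fin n → Fin d) (h : Fin (n + 1) → Fin d) : ℂ :=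
  ∑ i, (starRingEnd ℂ) (U i a) * V (Fin.cons i g) h

lemma mu_apply {d n : ℕ} (w : (Fin (n + 1) → Fin d) → ℝ)
    (V : Matrix (Fin (n + 1) → Fin d) (Fin (n + 1) → Fin d) ℂ) (f g : Fin (n + 1) → Fin d) :
    (V * Matrix.diagonal (fun f => (w f : ℂ)) * Vᴴ) f g
      = ∑ h, (w h : ℂ) * (V f h * (starRingEnd ℂ) (V g h)) := by
  rw [Matrix.mul_apply]
  refine Finset.sum_congr rfl fun h _ => ?_
  rw [Matrix.mul_diagonal, Matrix.conjTranspose_apply]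
  simp only [Complex.star_def]
  ring

lemma C1 {d n : ℕ} (w : (Fin (n + 1) → Fin d) → ℝ) (U : Matrix (Fin d) (Fin d) ℂ)
    (V : Matrix (Fin (n + 1) → Fin d) (Fin (n + 1) → Fin d) ℂ) (a : Fin d) :
    (star U * marginal0 (V * Matrix.diagonal (fun f => (w f : ℂ)) * Vᴴ) * U) a a
      = ∑ h, (w h : ℂ) * ∑ g : Fin n → Fin d, (Complex.normSq (zC U V a g h) : ℂ) := by
  have hz : ∀ (g : Fin n → Fin d) (h : Fin (n + 1) → Fin d),
      (Complex.normSq (zC U V a g h) : ℂ)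
        = ∑ i, ∑ j, (starRingEnd ℂ) (U i a) * V (Fin.cons i g) h
            * (U j a * (starRingEnd ℂ) (V (Fin.cons j g) h)) := by
    intro g h
    rw [← Complex.mul_conj, zC, map_sum, Finset.sum_mul_sum]
    refine Finset.sum_congr rfl fun i _ => Finset.sum_congr rfl fun j _ => ?_
    simp only [_root_.map_mul, RingHomCompTriple.comp_apply, RingHom.id_apply]
  calc (star U * marginal0 (V * Matrix.diagonal (fun f => (w f : ℂ)) * Vᴴ) * U) a a
      = ∑ j, ∑ i, (starRingEnd ℂ) (U i a)
          * (∑ g : Fin n → Fin d, ∑ h, (w h : ℂ)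
              * (V (Fin.cons i g) h * (starRingEnd ℂ) (V (Fin.cons j g) h)))
          * U j a := by
        simp only [Matrix.mul_apply, Matrix.star_apply, Complex.star_def]
        refine Finset.sum_congr rfl fun j _ => ?_
        rw [Finset.sum_mul]
        refine Finset.sum_congr rfl fun i _ => ?_
        rw [marginal0_apply]
        have hmm : ∑ g : Fin n → Fin d,
            (V * Matrix.diagonal (fun f => (w f : ℂ)) * Vᴴ) (Fin.cons i g) (Fin.cons j g)
            = ∑ g : Fin n → Fin d, ∑ h, (w h : ℂ)
                * (V (Fin.cons i g) h * (starRingEnd ℂ) (V (Fin.cons j g) h)) :=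
          Finset.sum_congr rfl fun g _ => mu_apply w V _ _
        rw [hmm]
    _ = ∑ j, ∑ i, ∑ g : Fin n → Fin d, ∑ h, (starRingEnd ℂ) (U i a) * V (Fin.cons i g) h
          * ((w h : ℂ) * (U j a * (starRingEnd ℂ) (V (Fin.cons j g) h))) := by
        refine Finset.sum_congr rfl fun j _ => Finset.sum_congr rfl fun i _ => ?_
        rw [Finset.mul_sum, Finset.sum_mul]
        refine Finset.sum_congr rfl fun g _ => ?_
        rw [Finset.mul_sum, Finset.sum_mul]
        refine Finset.sum_congr rfl fun h _ => by ring
    _ = ∑ h, ∑ g : Fin n → Fin d, ∑ i, ∑ j, (starRingEnd ℂ) (U i a) * V (Fin.cons i g) h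
          * ((w h : ℂ) * (U j a * (starRingEnd ℂ) (V (Fin.cons j g) h))) := by
        rw [sum4_reorder]
    _ = ∑ h, (w h : ℂ) * ∑ g : Fin n → Fin d, (Complex.normSq (zC U V a g h) : ℂ) := by
        refine Finset.sum_congr rfl fun h _ => ?_
        rw [Finset.mul_sum]
        refine Finset.sum_congr rfl fun g _ => ?_
        rw [hz, Finset.mul_sum]
        refine Finset.sum_congr rfl fun i _ => ?_
        rw [Finset.mul_sum]
        refine Finset.sum_congr rfl fun j _ => by ring

lemma hz_expand {d n : ℕ} (U : Matrix (Fin d) (Fin d) ℂ)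
    (V : Matrix (Fin (n + 1) → Fin d) (Fin (n + 1) → Fin d) ℂ) (a : Fin d)
    (g : Fin n → Fin d) (h : Fin (n + 1) → Fin d) :
    (Complex.normSq (zC U V a g h) : ℂ)
      = ∑ i, ∑ j, (starRingEnd ℂ) (U i a) * V (Fin.cons i g) h
          * (U j a * (starRingEnd ℂ) (V (Fin.cons j g) h)) := by
  rw [← Complex.mul_conj, zC, map_sum, Finset.sum_mul_sum]
  refine Finset.sum_congr rfl fun i _ => Finset.sum_congr rfl fun j _ => ?_
  simp only [_root_.map_mul, RingHomCompTriple.comp_apply, RingHom.id_apply]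

lemma C2 {d n : ℕ} (U : Matrix (Fin d) (Fin d) ℂ)
    (V : Matrix (Fin (n + 1) → Fin d) (Fin (n + 1) → Fin d) ℂ)
    (hU : U ∈ Matrix.unitaryGroup (Fin d) ℂ)
    (hV : V ∈ Matrix.unitaryGroup (Fin (n + 1) → Fin d) ℂ)
    (h : Fin (n + 1) → Fin d) :
    ∑ a, ∑ g : Fin n → Fin d, (Complex.normSq (zC U V a g h) : ℂ) = 1 := by
  calc ∑ a, ∑ g : Fin n → Fin d, (Complex.normSq (zC U V a g h) : ℂ)
      = ∑ a, ∑ g : Fin n → Fin d, ∑ i, ∑ j, (starRingEnd ℂ) (U i a) * V (Fin.cons i g) h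
          * (U j a * (starRingEnd ℂ) (V (Fin.cons j g) h)) :=
        Finset.sum_congr rfl fun a _ => Finset.sum_congr rfl fun g _ => hz_expand U V a g h
    _ = ∑ j, ∑ i, ∑ g : Fin n → Fin d, ∑ a, (starRingEnd ℂ) (U i a) * V (Fin.cons i g) h
          * (U j a * (starRingEnd ℂ) (V (Fin.cons j g) h)) := sum4_reorder _
    _ = ∑ j, ∑ i, ∑ g : Fin n → Fin d,
          V (Fin.cons i g) h * (starRingEnd ℂ) (V (Fin.cons j g) h) * (U * star U) j i := by
        refine Finset.sum_congr rfl fun j _ => Finset.sum_congr rfl fun i _ =>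
          Finset.sum_congr rfl fun g _ => ?_
        rw [Matrix.mul_apply, Finset.mul_sum]
        refine Finset.sum_congr rfl fun a _ => ?_
        simp only [Matrix.star_apply, Complex.star_def]
        ring
    _ = ∑ i, ∑ g : Fin n → Fin d,
          V (Fin.cons i g) h * (starRingEnd ℂ) (V (Fin.cons i g) h) := by
        rw [hU.2, Finset.sum_comm]
        refine Finset.sum_congr rfl fun i _ => ?_
        rw [Finset.sum_comm]
        refine Finset.sum_congr rfl fun g _ => ?_
        simp [Matrix.one_apply]
    _ = ∑ f : Fin (n + 1) → Fin d, (starRingEnd ℂ) (V f h) * V f h := by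
        rw [← Equiv.sum_comp (Fin.consEquiv (fun _ => Fin d))
          (fun f => (starRingEnd ℂ) (V f h) * V f h), Fintype.sum_prod_type]
        refine Finset.sum_congr rfl fun i _ => Finset.sum_congr rfl fun g _ => ?_
        simp [Fin.consEquiv]
        ring
    _ = (star V * V) h h := by
        rw [Matrix.mul_apply]
        refine Finset.sum_congr rfl fun f _ => by simp [Matrix.star_apply, Complex.star_def]
    _ = 1 := by rw [hV.1, Matrix.one_apply_eq]

lemma C3 {d n : ℕ} (U : Matrix (Fin d) (Fin d) ℂ)
    (V : Matrix (Fin (n + 1) → Fin d) (Fin (n + 1) → Fin d) ℂ)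
    (hU : U ∈ Matrix.unitaryGroup (Fin d) ℂ)
    (hV : V ∈ Matrix.unitaryGroup (Fin (n + 1) → Fin d) ℂ)
    (a : Fin d) (g : Fin n → Fin d) :
    ∑ h : Fin (n + 1) → Fin d, (Complex.normSq (zC U V a g h) : ℂ) = 1 := by
  have hcons : ∀ i j : Fin d, ((Fin.cons i g : Fin (n + 1) → Fin d) = Fin.cons j g) ↔ i = j := by
    intro i j
    constructor
    · intro hh
      have := congrFun hh 0
      simpa using this
    · intro hh; rw [hh]
  calc ∑ h : Fin (n + 1) → Fin d, (Complex.normSq (zC U V a g h) : ℂ)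
      = ∑ h : Fin (n + 1) → Fin d, ∑ i, ∑ j, (starRingEnd ℂ) (U i a) * V (Fin.cons i g) h
          * (U j a * (starRingEnd ℂ) (V (Fin.cons j g) h)) :=
        Finset.sum_congr rfl fun h _ => hz_expand U V a g h
    _ = ∑ i, ∑ j, ∑ h : Fin (n + 1) → Fin d, (starRingEnd ℂ) (U i a) * V (Fin.cons i g) h
          * (U j a * (starRingEnd ℂ) (V (Fin.cons j g) h)) := by
        rw [Finset.sum_comm]
        exact Finset.sum_congr rfl fun i _ => Finset.sum_comm
    _ = ∑ i, ∑ j, (starRingEnd ℂ) (U i a) * U j a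
          * (V * star V) (Fin.cons i g) (Fin.cons j g) := by
        refine Finset.sum_congr rfl fun i _ => Finset.sum_congr rfl fun j _ => ?_
        rw [Matrix.mul_apply, Finset.mul_sum]
        refine Finset.sum_congr rfl fun h _ => ?_
        simp only [Matrix.star_apply, Complex.star_def]
        ring
    _ = ∑ i, (starRingEnd ℂ) (U i a) * U i a := by
        rw [hV.2]
        refine Finset.sum_congr rfl fun i _ => ?_
        simp [Matrix.one_apply, hcons]
    _ = (star U * U) a a := by
        rw [Matrix.mul_apply]
        refine Finset.sum_congr rfl fun i _ => by simp [Matrix.star_apply, Complex.star_def]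
    _ = 1 := by rw [hU.1, Matrix.one_apply_eq]

/-! ### Main theorem -/

/-- Schur majorisation for marginals: for a diagonal density matrix `ω̄` on
`(ℂ^d)^{⊗(n+1)}`, a unitary `V`, and `ρ` the first marginal of `μ = V ω̄ Vᴴ`, the
eigenvalue vector of `ρ` is majorised by the diagonal of `ω̄₀^↓`, whose `j`-th entry is
the sum of the `j`-th consecutive block of `d^n` sorted eigenvalues of `ω̄`. -/
theorem marginal_majorised_by_sorted_blocks {d n : ℕ}
    (w : (Fin (n + 1) → Fin d) → ℝ) (hw0 : ∀ f, 0 ≤ w f) (hw1 : ∑ f, w f = 1)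
    (V : Matrix (Fin (n + 1) → Fin d) (Fin (n + 1) → Fin d) ℂ)
    (hV : V ∈ Matrix.unitaryGroup (Fin (n + 1) → Fin d) ℂ)
    (ρ : Matrix (Fin d) (Fin d) ℂ)
    (hρdef : ρ = marginal0 (V * Matrix.diagonal (fun f => (w f : ℂ)) * Vᴴ))
    (hρ : ρ.IsHermitian)
    (lam : Fin (d ^ (n + 1)) → ℝ) (hlam : lam = w ∘ finFunctionFinEquiv.symm)
    (q : Fin d → ℝ)
    (hq : ∀ j : Fin d, q j = ∑ i ∈ Finset.univ.filter
        (fun i : Fin (d ^ (n + 1)) => (i : ℕ) / d ^ n = (j : ℕ)), sortDesc lam i) :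
    Majorizes hρ.eigenvalues q := by
  rcases Nat.eq_zero_or_pos d with hd0 | hd0
  · exfalso
    subst hd0
    haveI : IsEmpty (Fin (n + 1) → Fin 0) := ⟨fun f => (f 0).elim0⟩
    simp at hw1
  have hdn : 0 < d ^ n := pow_pos hd0 n
  set U : Matrix (Fin d) (Fin d) ℂ := (hρ.eigenvectorUnitary : Matrix (Fin d) (Fin d) ℂ)
    with hUdef
  have hUu : U ∈ Matrix.unitaryGroup (Fin d) ℂ := hρ.eigenvectorUnitary.2
  -- eigenvalues as diagonal entries
  have hC1 : ∀ a : Fin d, ((hρ.eigenvalues a : ℝ) : ℂ)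
      = ∑ h, (w h : ℂ) * ∑ g : Fin n → Fin d, (Complex.normSq (zC U V a g h) : ℂ) := by
    intro a
    have hdiag : star U * ρ * U = diagonal (RCLike.ofReal ∘ hρ.eigenvalues) := by
      have := hρ.conjStarAlgAut_star_eigenvectorUnitary
      rwa [Unitary.conjStarAlgAut_star_apply] at this
    have h1 : (star U * ρ * U) a a = ((hρ.eigenvalues a : ℝ) : ℂ) := by
      rw [hdiag]
      simp [Matrix.diagonal_apply_eq]
    rw [← h1, hρdef]
    exact C1 w U V a
  -- key real identity
  have key : ∀ S : Finset (Fin d),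
      ∑ a ∈ S, hρ.eigenvalues a
        = ∑ h, (∑ a ∈ S, ∑ g : Fin n → Fin d, Complex.normSq (zC U V a g h)) * w h := by
    intro S
    have hcplx : ((∑ a ∈ S, hρ.eigenvalues a : ℝ) : ℂ)
        = ((∑ h, (∑ a ∈ S, ∑ g : Fin n → Fin d, Complex.normSq (zC U V a g h)) * w h : ℝ) : ℂ) := by
      push_cast
      calc (∑ a ∈ S, ((hρ.eigenvalues a : ℝ) : ℂ))
          = ∑ a ∈ S, ∑ h, (w h : ℂ)
              * ∑ g : Fin n → Fin d, (Complex.normSq (zC U V a g h) : ℂ) :=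
            Finset.sum_congr rfl fun a _ => hC1 a
        _ = ∑ h, ∑ a ∈ S, (w h : ℂ)
              * ∑ g : Fin n → Fin d, (Complex.normSq (zC U V a g h) : ℂ) := Finset.sum_comm
        _ = ∑ h, (∑ a ∈ S, ∑ g : Fin n → Fin d, (Complex.normSq (zC U V a g h) : ℂ)) * (w h : ℂ) := by
            refine Finset.sum_congr rfl fun h _ => ?_
            rw [Finset.sum_mul]
            exact Finset.sum_congr rfl fun a _ => by ring
    exact_mod_cast hcplx
  -- the weights c, with their properties
  have hfull : ∀ h, ∑ a, ∑ g : Fin n → Fin d, Complex.normSq (zC U V a g h) = 1 := by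
    intro h
    have := C2 U V hUu hV h
    exact_mod_cast this
  have hcol : ∀ (a : Fin d) (g : Fin n → Fin d),
      ∑ h, Complex.normSq (zC U V a g h) = 1 := by
    intro a g
    have := C3 U V hUu hV a g
    exact_mod_cast this
  have hc0 : ∀ (S : Finset (Fin d)) h,
      0 ≤ ∑ a ∈ S, ∑ g : Fin n → Fin d, Complex.normSq (zC U V a g h) :=
    fun S h => Finset.sum_nonneg fun a _ => Finset.sum_nonneg fun g _ => Complex.normSq_nonneg _
  have hc1 : ∀ (S : Finset (Fin d)) h,
      ∑ a ∈ S, ∑ g : Fin n → Fin d, Complex.normSq (zC U V a g h) ≤ 1 := by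
    intro S h
    rw [← hfull h]
    exact Finset.sum_le_sum_of_subset_of_nonneg (Finset.subset_univ S)
      (fun a _ _ => Finset.sum_nonneg fun g _ => Complex.normSq_nonneg _)
  have hcsum : ∀ S : Finset (Fin d),
      ∑ h, ∑ a ∈ S, ∑ g : Fin n → Fin d, Complex.normSq (zC U V a g h)
        = (S.card : ℝ) * (d ^ n : ℕ) := by
    intro S
    rw [Finset.sum_comm]
    have : ∀ a ∈ S, ∑ h, ∑ g : Fin n → Fin d, Complex.normSq (zC U V a g h)
        = ((d ^ n : ℕ) : ℝ) := by
      intro a _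
      rw [Finset.sum_comm]
      have : ∀ g : Fin n → Fin d, ∑ h, Complex.normSq (zC U V a g h) = 1 := hcol a
      rw [Finset.sum_congr rfl fun g _ => this g]
      simp [Finset.card_univ]
    rw [Finset.sum_congr rfl this, Finset.sum_const, nsmul_eq_mul]
  -- lam facts
  have hlam0 : ∀ i, 0 ≤ lam i := by
    intro i; rw [hlam]; exact hw0 _
  have hlamsum : ∑ i, lam i = 1 := by
    rw [hlam, ← hw1]
    exact Equiv.sum_comp finFunctionFinEquiv.symm w
  -- q facts
  have hq0 : ∀ j, 0 ≤ q j := by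
    intro j
    rw [hq]
    exact Finset.sum_nonneg fun i _ => hlam0 _
  -- the block-division map
  have hgd : ∀ i : Fin (d ^ (n + 1)), (i : ℕ) / d ^ n < d := by
    intro i
    rw [Nat.div_lt_iff_lt_mul hdn]
    exact lt_of_lt_of_eq i.isLt (by ring)
  set gdiv : Fin (d ^ (n + 1)) → Fin d := fun i => ⟨(i : ℕ) / d ^ n, hgd i⟩ with hgdiv
  have hqfib : ∀ j : Fin d, q j = ∑ i ∈ Finset.univ.filter (fun i => gdiv i = j),
      sortDesc lam i := by
    intro j
    rw [hq]
    congr 1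
    apply Finset.filter_congr
    intro i _
    simp [hgdiv, Fin.ext_iff]
  -- the fiberwise sums
  have hfiber : ∀ k : ℕ,
      topSum lam (k * d ^ n)
        = ∑ j ∈ Finset.univ.filter (fun j : Fin d => (j : ℕ) < k), q j := by
    intro k
    rw [Finset.sum_congr rfl fun j (_ : j ∈ _) => hqfib j,
      Finset.sum_fiberwise_eq_sum_filter Finset.univ
        (Finset.univ.filter (fun j : Fin d => (j : ℕ) < k)) gdiv (sortDesc lam)]
    rw [topSum]
    congr 1
    apply Finset.filter_congr
    intro i _
    simp only [hgdiv, Finset.mem_filter, Finset.mem_univ, true_and]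
    exact (Nat.div_lt_iff_lt_mul hdn).symm
  -- card of the truncation set
  have hFkcard : ∀ k : ℕ,
      (Finset.univ.filter (fun j : Fin d => (j : ℕ) < k)).card ≤ k := by
    intro k
    have : (Finset.univ.filter (fun j : Fin d => (j : ℕ) < k)).card
        ≤ (Finset.range k).card :=
      Finset.card_le_card_of_injOn (fun j => (j : ℕ))
        (fun j hj => Finset.mem_range.mpr (by simpa using hj))
        (fun i _ j _ hij => Fin.ext hij)
    simpa using this
  constructor
  · -- the inequalities
    intro k
    set Fk := Finset.univ.filter (fun i : Fin d => (i : ℕ) < k) with hFk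
    set S := Fk.image (sortPerm hρ.eigenvalues) with hS
    have h1 : topSum hρ.eigenvalues k = ∑ a ∈ S, hρ.eigenvalues a := by
      rw [hS, Finset.sum_image (fun i _ j _ hij => (sortPerm hρ.eigenvalues).injective hij)]
      rfl
    have hScard : S.card ≤ k := by
      rw [hS, Finset.card_image_of_injective _ (sortPerm hρ.eigenvalues).injective]
      exact hFkcard k
    have h2 : ∑ a ∈ S, hρ.eigenvalues a
        = ∑ i : Fin (d ^ (n + 1)),
            (∑ a ∈ S, ∑ g : Fin n → Fin d,
              Complex.normSq (zC U V a g (finFunctionFinEquiv.symm i))) * lam i := by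
      rw [key S, ← Equiv.sum_comp finFunctionFinEquiv.symm
        (fun h => (∑ a ∈ S, ∑ g : Fin n → Fin d, Complex.normSq (zC U V a g h)) * w h)]
      refine Finset.sum_congr rfl fun i _ => ?_
      rw [hlam]
      rfl
    have h3 : ∑ i : Fin (d ^ (n + 1)),
          (∑ a ∈ S, ∑ g : Fin n → Fin d,
            Complex.normSq (zC U V a g (finFunctionFinEquiv.symm i))) * lam i
        ≤ topSum lam (k * d ^ n) := by
      refine sum_mul_le_topSum lam _ hlam0 (fun i => hc0 S _) (fun i => hc1 S _)
        (k * d ^ n) ?_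
      rw [Equiv.sum_comp finFunctionFinEquiv.symm
        (fun h => ∑ a ∈ S, ∑ g : Fin n → Fin d, Complex.normSq (zC U V a g h)), hcsum S]
      push_cast
      have : (S.card : ℝ) ≤ (k : ℝ) := by exact_mod_cast hScard
      have hdnn : (0 : ℝ) ≤ ((d : ℝ) ^ n) := by positivity
      nlinarith
    have h4 : ∑ j ∈ Fk, q j ≤ topSum q k :=
      sum_subset_le_topSum q hq0 Fk k (hFkcard k)
    calc topSum hρ.eigenvalues k = ∑ a ∈ S, hρ.eigenvalues a := h1
      _ ≤ topSum lam (k * d ^ n) := h2 ▸ h3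
      _ = ∑ j ∈ Fk, q j := hfiber k
      _ ≤ topSum q k := h4
  · -- equality of the sums
    have hsumeig : ∑ a, hρ.eigenvalues a = 1 := by
      rw [key Finset.univ]
      calc ∑ h, (∑ a, ∑ g : Fin n → Fin d, Complex.normSq (zC U V a g h)) * w h
          = ∑ h, 1 * w h := Finset.sum_congr rfl fun h _ => by rw [hfull h]
        _ = 1 := by simpa using hw1
    have hsumq : ∑ j, q j = 1 := by
      rw [Finset.sum_congr rfl fun j (_ : j ∈ Finset.univ) => hqfib j,
        Finset.sum_fiberwise Finset.univ gdiv (sortDesc lam), sum_sortDesc, hlamsum]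
    rw [hsumeig, hsumq]
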